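/- Let $\Delta(t,t') = -\sin(\omega(t-t'))/\omega$ be the Pauli–Jordan kernel of the simple harmonic oscillator with frequency $\omega > 0$, restricted to the interval $[-T,T]$, and let $u(t) = e^{-i\omega t}/\sqrt{2\omega}$. Then the integral operator $i\Delta$ on $L^2([-T,T])$ has exactly two nonzero eigenvalues $\pm\lambda$ with $\lambda = \sqrt{\langle u,u\rangle^2 - |\langle u,\bar u\rangle|^2}$, where $\langle f,g\rangle = \int_{-T}^T \overline{f(t)} g(t)\,dt$. -/

import Mathlib

open MeasureTheory

noncomputable section

/-- The S-J mode function `u(t) = e^{-iωt}/√(2ω)` of the simple harmonic oscillator. -/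
def shoMode (ω : ℝ) (t : ℝ) : ℂ := Complex.exp (-(ω * t) * Complex.I) / (Real.sqrt (2 * ω) : ℂ)

/-- The `L²` inner product `⟨f,g⟩ = ∫_{-T}^T conj (f t) * g t dt`. -/
def ipT (T : ℝ) (f g : ℝ → ℂ) : ℂ := ∫ t in (-T)..T, (starRingEnd ℂ) (f t) * g t

/-- The operator `i∆` with Pauli–Jordan kernel `∆(t,t') = -sin(ω(t-t'))/ω` on `[-T,T]`. -/
def iDeltaSHO (ω T : ℝ) (f : ℝ → ℂ) (t : ℝ) : ℂ :=
  Complex.I * ∫ t' in (-T)..T, ((-(Real.sin (ω * (t - t')) / ω) : ℝ) : ℂ) * f t'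

namespace ShoAux

lemma cont_shoMode (ω : ℝ) : Continuous (shoMode ω) := by
  unfold shoMode
  exact (Complex.continuous_exp.comp (by continuity)).div_const _

lemma shoMode_eq (ω t : ℝ) :
    shoMode ω t = (((Real.cos (ω*t) : ℝ) : ℂ) - ((Real.sin (ω*t) : ℝ) : ℂ) * Complex.I)
      / ((Real.sqrt (2*ω) : ℝ) : ℂ) := by
  unfold shoMode
  congr 1
  have h : -((ω:ℂ) * (t:ℂ)) * Complex.I = ((-(ω*t) : ℝ) : ℂ) * Complex.I := by push_cast; ring
  rw [h, Complex.exp_mul_I, ← Complex.ofReal_cos, ← Complex.ofReal_sin,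
    Real.cos_neg, Real.sin_neg]
  push_cast
  ring

lemma conj_shoMode_eq (ω t : ℝ) :
    (starRingEnd ℂ) (shoMode ω t)
      = (((Real.cos (ω*t) : ℝ) : ℂ) + ((Real.sin (ω*t) : ℝ) : ℂ) * Complex.I)
        / ((Real.sqrt (2*ω) : ℝ) : ℂ) := by
  rw [shoMode_eq, map_div₀, map_sub, map_mul]
  simp only [Complex.conj_ofReal, Complex.conj_I]
  ring

lemma kernel (ω : ℝ) (hω : 0 < ω) (t t' : ℝ) :
    Complex.I * ((-(Real.sin (ω * (t - t')) / ω) : ℝ) : ℂ)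
      = shoMode ω t * (starRingEnd ℂ) (shoMode ω t')
        - (starRingEnd ℂ) (shoMode ω t) * shoMode ω t' := by
  have h2ω : (0:ℝ) ≤ 2*ω := by linarith
  have hs : ((Real.sqrt (2*ω) : ℝ) : ℂ) * ((Real.sqrt (2*ω) : ℝ) : ℂ) = ((2*ω : ℝ) : ℂ) := by
    rw [← Complex.ofReal_mul, Real.mul_self_sqrt h2ω]
  have hωne : ((ω:ℝ):ℂ) ≠ 0 := by exact_mod_cast hω.ne'
  have h2ωne : ((2*ω:ℝ):ℂ) ≠ 0 := by
    rw [Complex.ofReal_ne_zero]; positivity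
  rw [conj_shoMode_eq, conj_shoMode_eq, shoMode_eq, shoMode_eq,
    div_mul_div_comm, div_mul_div_comm, hs]
  have hsin : Real.sin (ω*(t-t')) = Real.sin (ω*t) * Real.cos (ω*t') - Real.cos (ω*t) * Real.sin (ω*t') := by
    rw [mul_sub, Real.sin_sub]
  rw [div_sub_div_same, eq_div_iff h2ωne]
  push_cast [hsin]
  field_simp
  ring_nf

lemma huIcc {T : ℝ} (hT : 0 < T) : Set.uIcc (-T) T = Set.Icc (-T) T :=
  Set.uIcc_of_le (by linarith)

lemma iDelta_apply (ω T : ℝ) (hω : 0 < ω) (hT : 0 < T) (f : ℝ → ℂ)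
    (hf : ContinuousOn f (Set.Icc (-T) T)) (t : ℝ) :
    iDeltaSHO ω T f t
      = shoMode ω t * ipT T (shoMode ω) f
        - (starRingEnd ℂ) (shoMode ω t)
          * ipT T (fun s => (starRingEnd ℂ) (shoMode ω s)) f := by
  have hf' : ContinuousOn f (Set.uIcc (-T) T) := by rw [huIcc hT]; exact hf
  have hint1 : IntervalIntegrable (fun s => (starRingEnd ℂ) (shoMode ω s) * f s) volume (-T) T :=
    (((continuous_star.comp (cont_shoMode ω)).continuousOn).mul hf').intervalIntegrable
  have hint2 : IntervalIntegrable (fun s => shoMode ω s * f s) volume (-T) T :=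
    (((cont_shoMode ω).continuousOn).mul hf').intervalIntegrable
  unfold iDeltaSHO
  rw [← intervalIntegral.integral_const_mul]
  rw [intervalIntegral.integral_congr
    (g := fun s => shoMode ω t * ((starRingEnd ℂ) (shoMode ω s) * f s)
      - (starRingEnd ℂ) (shoMode ω t) * (shoMode ω s * f s)) ?_]
  · rw [intervalIntegral.integral_sub (hint1.const_mul _) (hint2.const_mul _),
      intervalIntegral.integral_const_mul, intervalIntegral.integral_const_mul]
    unfold ipT
    simp only [Complex.conj_conj]
  · intro s _
    simp only
    rw [← mul_assoc, kernel ω hω t s]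
    ring

lemma conj_shoMode (ω s : ℝ) :
    (starRingEnd ℂ) (shoMode ω s)
      = Complex.exp (((ω:ℂ) * (s:ℂ)) * Complex.I) / ((Real.sqrt (2*ω) : ℝ) : ℂ) := by
  unfold shoMode
  rw [map_div₀, ← Complex.exp_conj]
  congr 1
  · congr 1
    simp only [map_mul, map_neg, Complex.conj_I, Complex.conj_ofReal]
    ring
  · exact Complex.conj_ofReal _

lemma sqrt_mul_self' (ω : ℝ) (hω : 0 < ω) :
    ((Real.sqrt (2*ω) : ℝ) : ℂ) * ((Real.sqrt (2*ω) : ℝ) : ℂ) = ((2*ω : ℝ) : ℂ) := by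
  rw [← Complex.ofReal_mul, Real.mul_self_sqrt (by linarith)]

lemma integral_exp_sym (c T : ℝ) (hc : c ≠ 0) :
    (∫ t in (-T)..T, Complex.exp (((c:ℂ) * Complex.I) * (t:ℂ)))
      = ((Real.sin (c*T) * 2 / c : ℝ) : ℂ) := by
  have hc' : ((c:ℝ):ℂ) ≠ 0 := Complex.ofReal_ne_zero.mpr hc
  have hcne : ((c:ℂ) * Complex.I) ≠ 0 := by
    simp [hc', Complex.I_ne_zero]
  rw [integral_exp_mul_complex hcne]
  rw [show ((c:ℂ) * Complex.I) * ((T:ℝ):ℂ) = ((c*T : ℝ) : ℂ) * Complex.I by push_cast; ring]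
  rw [show ((c:ℂ) * Complex.I) * ((-T:ℝ):ℂ) = ((-(c*T) : ℝ) : ℂ) * Complex.I by push_cast; ring]
  rw [Complex.exp_mul_I, Complex.exp_mul_I, ← Complex.ofReal_cos, ← Complex.ofReal_sin,
    ← Complex.ofReal_cos, ← Complex.ofReal_sin, Real.cos_neg, Real.sin_neg]
  rw [div_eq_iff hcne]
  push_cast
  field_simp
  ring

lemma ipT_uu (ω T : ℝ) (hω : 0 < ω) :
    ipT T (shoMode ω) (shoMode ω) = ((T/ω : ℝ) : ℂ) := by
  unfold ipT
  have hpt : ∀ s : ℝ, (starRingEnd ℂ) (shoMode ω s) * shoMode ω s = ((1/(2*ω) : ℝ) : ℂ) := by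
    intro s
    rw [conj_shoMode]
    unfold shoMode
    rw [div_mul_div_comm, sqrt_mul_self' ω hω, ← Complex.exp_add]
    rw [show ((ω:ℂ) * (s:ℂ)) * Complex.I + -((ω:ℂ) * (s:ℂ)) * Complex.I = 0 by ring,
      Complex.exp_zero]
    push_cast
    ring
  simp_rw [hpt]
  rw [intervalIntegral.integral_const]
  rw [show T - (-T) = 2*T by ring]
  rw [Complex.real_smul, ← Complex.ofReal_mul]
  congr 1
  field_simp

lemma ipT_u_ub (ω T : ℝ) (hω : 0 < ω) :
    ipT T (shoMode ω) (fun s => (starRingEnd ℂ) (shoMode ω s))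
      = ((Real.sin (2*ω*T) / (2*ω^2) : ℝ) : ℂ) := by
  unfold ipT
  have hpt : ∀ s : ℝ, (starRingEnd ℂ) (shoMode ω s) * (starRingEnd ℂ) (shoMode ω s)
      = ((1/(2*ω) : ℝ) : ℂ) * Complex.exp ((((2*ω : ℝ):ℂ) * Complex.I) * (s:ℂ)) := by
    intro s
    rw [conj_shoMode, div_mul_div_comm, sqrt_mul_self' ω hω, ← Complex.exp_add]
    rw [show ((ω:ℂ) * (s:ℂ)) * Complex.I + ((ω:ℂ) * (s:ℂ)) * Complex.I
        = (((2*ω : ℝ):ℂ) * Complex.I) * (s:ℂ) by push_cast; ring]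
    push_cast
    ring
  simp_rw [hpt]
  rw [intervalIntegral.integral_const_mul]
  rw [integral_exp_sym (2*ω) T (by positivity)]
  rw [← Complex.ofReal_mul]
  congr 1
  field_simp

lemma ipT_ub_u (ω T : ℝ) (hω : 0 < ω) :
    ipT T (fun s => (starRingEnd ℂ) (shoMode ω s)) (shoMode ω)
      = ((Real.sin (2*ω*T) / (2*ω^2) : ℝ) : ℂ) := by
  unfold ipT
  have hpt : ∀ s : ℝ, (starRingEnd ℂ) ((starRingEnd ℂ) (shoMode ω s)) * shoMode ω s
      = ((1/(2*ω) : ℝ) : ℂ) * Complex.exp ((((-(2*ω) : ℝ):ℂ) * Complex.I) * (s:ℂ)) := by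
    intro s
    rw [Complex.conj_conj]
    unfold shoMode
    rw [div_mul_div_comm, sqrt_mul_self' ω hω, ← Complex.exp_add]
    rw [show -((ω:ℂ) * (s:ℂ)) * Complex.I + -((ω:ℂ) * (s:ℂ)) * Complex.I
        = (((-(2*ω) : ℝ):ℂ) * Complex.I) * (s:ℂ) by push_cast; ring]
    push_cast
    ring
  simp_rw [hpt]
  rw [intervalIntegral.integral_const_mul]
  rw [integral_exp_sym (-(2*ω)) T (neg_ne_zero.mpr (by positivity))]
  rw [← Complex.ofReal_mul]
  congr 1
  rw [show -(2*ω)*T = -(2*ω*T) by ring, Real.sin_neg]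
  field_simp

lemma ipT_ub_ub (ω T : ℝ) (hω : 0 < ω) :
    ipT T (fun s => (starRingEnd ℂ) (shoMode ω s)) (fun s => (starRingEnd ℂ) (shoMode ω s))
      = ((T/ω : ℝ) : ℂ) := by
  unfold ipT
  have hpt : ∀ s : ℝ, (starRingEnd ℂ) ((starRingEnd ℂ) (shoMode ω s)) * (starRingEnd ℂ) (shoMode ω s)
      = (starRingEnd ℂ) (shoMode ω s) * shoMode ω s := by
    intro s; rw [Complex.conj_conj]; ring
  simp_rw [hpt]
  have := ipT_uu ω T hω
  unfold ipT at this
  exact this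

lemma ipT_lin (T : ℝ) (g f₁ f₂ : ℝ → ℂ) (hg : Continuous g) (h1 : Continuous f₁)
    (h2 : Continuous f₂) (c₁ c₂ : ℂ) :
    ipT T g (fun t => c₁ * f₁ t - c₂ * f₂ t) = c₁ * ipT T g f₁ - c₂ * ipT T g f₂ := by
  unfold ipT
  have e : ∀ t : ℝ, (starRingEnd ℂ) (g t) * (c₁ * f₁ t - c₂ * f₂ t)
      = c₁ * ((starRingEnd ℂ) (g t) * f₁ t) - c₂ * ((starRingEnd ℂ) (g t) * f₂ t) := by
    intro t; ring
  simp_rw [e]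
  have i1 : IntervalIntegrable (fun t => c₁ * ((starRingEnd ℂ) (g t) * f₁ t)) volume (-T) T :=
    (continuous_const.mul ((continuous_star.comp hg).mul h1)).intervalIntegrable _ _
  have i2 : IntervalIntegrable (fun t => c₂ * ((starRingEnd ℂ) (g t) * f₂ t)) volume (-T) T :=
    (continuous_const.mul ((continuous_star.comp hg).mul h2)).intervalIntegrable _ _
  rw [intervalIntegral.integral_sub i1 i2,
    intervalIntegral.integral_const_mul, intervalIntegral.integral_const_mul]

end ShoAux

/-- The operator `i∆` of the simple harmonic oscillator restricted to `[-T,T]` has exactly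
two nonzero eigenvalues `±λ`, where `λ = √(⟨u,u⟩² - |⟨u,ū⟩|²)`. -/
theorem sho_iDelta_eigenvalues (ω T : ℝ) (hω : 0 < ω) (hT : 0 < T) (lam : ℝ)
    (hlam : lam = Real.sqrt (‖ipT T (shoMode ω) (shoMode ω)‖ ^ 2
      - ‖ipT T (shoMode ω) (fun t => (starRingEnd ℂ) (shoMode ω t))‖ ^ 2)) :
    ∀ μ : ℂ, μ ≠ 0 →
      ((∃ f : ℝ → ℂ, ContinuousOn f (Set.Icc (-T) T) ∧ (∃ t ∈ Set.Icc (-T) T, f t ≠ 0) ∧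
          ∀ t ∈ Set.Icc (-T) T, iDeltaSHO ω T f t = μ * f t)
        ↔ (μ = (lam : ℂ) ∨ μ = -(lam : ℂ))) := by
  intro μ hμ0
  have hA : (0:ℝ) < T/ω := by positivity
  have hBabs : |Real.sin (2*ω*T) / (2*ω^2)| ≤ T/ω := by
    rw [abs_div, abs_of_pos (show (0:ℝ) < 2*ω^2 by positivity)]
    have h1 : |Real.sin (2*ω*T)| ≤ 2*ω*T := by
      have h2 := Real.abs_sin_le_abs (x := 2*ω*T)
      rwa [abs_of_pos (by positivity : (0:ℝ) < 2*ω*T)] at h2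
    calc |Real.sin (2*ω*T)| / (2*ω^2) ≤ (2*ω*T)/(2*ω^2) := by gcongr
      _ = T/ω := by field_simp
  have hBle : Real.sin (2*ω*T) / (2*ω^2) ≤ T/ω := le_trans (le_abs_self _) hBabs
  have hlam' : lam = Real.sqrt ((T/ω)^2 - (Real.sin (2*ω*T)/(2*ω^2))^2) := by
    rw [hlam, ShoAux.ipT_uu ω T hω, ShoAux.ipT_u_ub ω T hω, Complex.norm_real,
      Complex.norm_real, Real.norm_eq_abs, Real.norm_eq_abs, sq_abs, sq_abs]
  have hsq_nonneg : 0 ≤ (T/ω)^2 - (Real.sin (2*ω*T)/(2*ω^2))^2 := by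
    nlinarith [abs_nonneg (Real.sin (2*ω*T)/(2*ω^2)), sq_abs (Real.sin (2*ω*T)/(2*ω^2)), hBabs, hA]
  have hlam_sq : lam^2 = (T/ω)^2 - (Real.sin (2*ω*T)/(2*ω^2))^2 := by
    rw [hlam']; exact Real.sq_sqrt hsq_nonneg
  have hlam_nonneg : 0 ≤ lam := hlam' ▸ Real.sqrt_nonneg _
  constructor
  · rintro ⟨f, hfc, ⟨t₀, ht₀, hft₀⟩, heig⟩
    have hrep : ∀ t ∈ Set.Icc (-T) T, μ * f t
        = ipT T (shoMode ω) f * shoMode ω t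
          - ipT T (fun s => (starRingEnd ℂ) (shoMode ω s)) f * (starRingEnd ℂ) (shoMode ω t) := by
      intro t ht
      rw [← heig t ht, ShoAux.iDelta_apply ω T hω hT f hfc t]
      ring
    have key : ∀ g : ℝ → ℂ, Continuous g →
        μ * ipT T g f
          = ipT T (shoMode ω) f * ipT T g (shoMode ω)
            - ipT T (fun s => (starRingEnd ℂ) (shoMode ω s)) f
              * ipT T g (fun s => (starRingEnd ℂ) (shoMode ω s)) := by
      intro g hg
      have h1 : μ * ipT T g f
          = ipT T g (fun t => ipT T (shoMode ω) f * shoMode ω t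
              - ipT T (fun s => (starRingEnd ℂ) (shoMode ω s)) f
                * (starRingEnd ℂ) (shoMode ω t)) := by
        unfold ipT
        rw [← intervalIntegral.integral_const_mul]
        apply intervalIntegral.integral_congr
        intro s hs
        rw [ShoAux.huIcc hT] at hs
        show μ * ((starRingEnd ℂ) (g s) * f s) = _
        rw [mul_left_comm, hrep s hs]
        simp only [ipT]
      rw [h1, ShoAux.ipT_lin T g (shoMode ω) (fun s => (starRingEnd ℂ) (shoMode ω s)) hg
        (ShoAux.cont_shoMode ω) (continuous_star.comp (ShoAux.cont_shoMode ω)) _ _]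
    have e1 := key (shoMode ω) (ShoAux.cont_shoMode ω)
    have e2 := key (fun s => (starRingEnd ℂ) (shoMode ω s))
      (continuous_star.comp (ShoAux.cont_shoMode ω))
    rw [ShoAux.ipT_uu ω T hω, ShoAux.ipT_u_ub ω T hω] at e1
    rw [ShoAux.ipT_ub_u ω T hω, ShoAux.ipT_ub_ub ω T hω] at e2
    have hc12 : ¬(ipT T (shoMode ω) f = 0
        ∧ ipT T (fun s => (starRingEnd ℂ) (shoMode ω s)) f = 0) := by
      rintro ⟨h1, h2⟩
      have h3 := hrep t₀ ht₀
      rw [h1, h2] at h3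
      simp only [zero_mul, sub_zero] at h3
      exact hft₀ ((mul_eq_zero.mp h3).resolve_left hμ0)
    have hμsq : μ^2 = ((T/ω : ℝ):ℂ)^2 - ((Real.sin (2*ω*T)/(2*ω^2) : ℝ):ℂ)^2 := by
      have k1 : (μ^2 - ((T/ω : ℝ):ℂ)^2 + ((Real.sin (2*ω*T)/(2*ω^2) : ℝ):ℂ)^2)
          * ipT T (shoMode ω) f = 0 := by
        linear_combination (μ + ((T/ω : ℝ):ℂ)) * e1 - ((Real.sin (2*ω*T)/(2*ω^2) : ℝ):ℂ) * e2
      have k2 : (μ^2 - ((T/ω : ℝ):ℂ)^2 + ((Real.sin (2*ω*T)/(2*ω^2) : ℝ):ℂ)^2)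
          * ipT T (fun s => (starRingEnd ℂ) (shoMode ω s)) f = 0 := by
        linear_combination ((Real.sin (2*ω*T)/(2*ω^2) : ℝ):ℂ) * e1 + (μ - ((T/ω : ℝ):ℂ)) * e2
      rcases not_and_or.mp hc12 with h | h
      · have h4 := (mul_eq_zero.mp k1).resolve_right h
        linear_combination h4
      · have h4 := (mul_eq_zero.mp k2).resolve_right h
        linear_combination h4
    have hμlam : μ^2 = ((lam:ℝ):ℂ)^2 := by
      rw [hμsq, show ((lam:ℝ):ℂ)^2 = ((lam^2 : ℝ):ℂ) by push_cast; ring, hlam_sq]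
      push_cast
      ring
    have h5 : (μ - (lam:ℂ)) * (μ + (lam:ℂ)) = 0 := by linear_combination hμlam
    rcases mul_eq_zero.mp h5 with h | h
    · exact Or.inl (sub_eq_zero.mp h)
    · exact Or.inr (eq_neg_of_add_eq_zero_left h)
  · intro hμ
    have hμsq : μ^2 = ((T/ω : ℝ):ℂ)^2 - ((Real.sin (2*ω*T)/(2*ω^2) : ℝ):ℂ)^2 := by
      have h1 : μ^2 = ((lam:ℝ):ℂ)^2 := by rcases hμ with h|h <;> rw [h] <;> ring
      rw [h1, show ((lam:ℝ):ℂ)^2 = ((lam^2 : ℝ):ℂ) by push_cast; ring, hlam_sq]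
      push_cast
      ring
    have hl0 : 0 < lam := by
      rcases hμ with h|h <;>
      · refine lt_of_le_of_ne hlam_nonneg (Ne.symm fun h0 => hμ0 ?_)
        rw [h, h0]
        simp
    have build : ∀ c₁ c₂ : ℂ,
        c₁ * ((T/ω : ℝ):ℂ) - c₂ * ((Real.sin (2*ω*T)/(2*ω^2) : ℝ):ℂ) = μ * c₁ →
        c₁ * ((Real.sin (2*ω*T)/(2*ω^2) : ℝ):ℂ) - c₂ * ((T/ω : ℝ):ℂ) = μ * c₂ →
        c₁ ≠ c₂ →
        (∃ f : ℝ → ℂ, ContinuousOn f (Set.Icc (-T) T) ∧ (∃ t ∈ Set.Icc (-T) T, f t ≠ 0) ∧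
          ∀ t ∈ Set.Icc (-T) T, iDeltaSHO ω T f t = μ * f t) := by
      intro c₁ c₂ hE1 hE2 hne
      have hfcont : Continuous (fun t => c₁ * shoMode ω t - c₂ * (starRingEnd ℂ) (shoMode ω t)) :=
        (continuous_const.mul (ShoAux.cont_shoMode ω)).sub
          (continuous_const.mul (continuous_star.comp (ShoAux.cont_shoMode ω)))
      refine ⟨fun t => c₁ * shoMode ω t - c₂ * (starRingEnd ℂ) (shoMode ω t),
        hfcont.continuousOn, ⟨0, ⟨by linarith, by linarith⟩, ?_⟩, ?_⟩
      · have hu0 : shoMode ω 0 = (((Real.sqrt (2*ω) : ℝ):ℂ))⁻¹ := by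
          unfold shoMode
          norm_num
        have hcu0 : (starRingEnd ℂ) (shoMode ω 0) = (((Real.sqrt (2*ω) : ℝ):ℂ))⁻¹ := by
          rw [hu0, map_inv₀, Complex.conj_ofReal]
        have hsne : (((Real.sqrt (2*ω) : ℝ):ℂ)) ≠ 0 := by
          rw [Complex.ofReal_ne_zero]
          positivity
        show c₁ * shoMode ω 0 - c₂ * (starRingEnd ℂ) (shoMode ω 0) ≠ 0
        rw [hcu0, hu0]
        intro h0
        apply hne
        have h1 : (c₁ - c₂) * (((Real.sqrt (2*ω) : ℝ):ℂ))⁻¹ = 0 := by linear_combination h0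
        rcases mul_eq_zero.mp h1 with h | h
        · exact sub_eq_zero.mp h
        · exact absurd (inv_eq_zero.mp h) hsne
      · intro t ht
        rw [ShoAux.iDelta_apply ω T hω hT _ hfcont.continuousOn t,
          ShoAux.ipT_lin T (shoMode ω) (shoMode ω) (fun s => (starRingEnd ℂ) (shoMode ω s))
            (ShoAux.cont_shoMode ω) (ShoAux.cont_shoMode ω)
            (continuous_star.comp (ShoAux.cont_shoMode ω)) c₁ c₂,
          ShoAux.ipT_lin T (fun s => (starRingEnd ℂ) (shoMode ω s)) (shoMode ω)
            (fun s => (starRingEnd ℂ) (shoMode ω s))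
            (continuous_star.comp (ShoAux.cont_shoMode ω)) (ShoAux.cont_shoMode ω)
            (continuous_star.comp (ShoAux.cont_shoMode ω)) c₁ c₂,
          ShoAux.ipT_uu ω T hω, ShoAux.ipT_u_ub ω T hω,
          ShoAux.ipT_ub_u ω T hω, ShoAux.ipT_ub_ub ω T hω]
        have goal_eq : shoMode ω t * (c₁ * ((T/ω : ℝ):ℂ) - c₂ * ((Real.sin (2*ω*T)/(2*ω^2) : ℝ):ℂ))
            - (starRingEnd ℂ) (shoMode ω t)
              * (c₁ * ((Real.sin (2*ω*T)/(2*ω^2) : ℝ):ℂ) - c₂ * ((T/ω : ℝ):ℂ))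
            = μ * (c₁ * shoMode ω t - c₂ * (starRingEnd ℂ) (shoMode ω t)) := by
          rw [hE1, hE2]
          ring
        exact goal_eq
    by_cases hc : ((T/ω : ℝ):ℂ) + μ = 0
    · have hμA : μ = -((T/ω : ℝ):ℂ) := by linear_combination hc
      have hlamA : lam = T/ω := by
        rcases hμ with hcase | hcase
        · exfalso
          rw [hcase] at hμA
          have h1 : lam = -(T/ω) := by exact_mod_cast hμA
          linarith
        · rw [hcase] at hμA
          have h1 : -lam = -(T/ω) := by exact_mod_cast hμA
          linarith
      have hB0 : Real.sin (2*ω*T)/(2*ω^2) = 0 := by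
        have h2 : (Real.sin (2*ω*T)/(2*ω^2))^2 = 0 := by nlinarith [hlam_sq, hlamA]
        exact pow_eq_zero_iff two_ne_zero |>.mp h2
      apply build ((Real.sin (2*ω*T)/(2*ω^2) : ℝ):ℂ) (((T/ω : ℝ):ℂ) - μ)
      · ring
      · linear_combination hμsq
      · rw [hB0, hμA]
        intro h
        have h1 : (0:ℝ) = T/ω - -(T/ω) := by exact_mod_cast h
        linarith
    · apply build (((T/ω : ℝ):ℂ) + μ) ((Real.sin (2*ω*T)/(2*ω^2) : ℝ):ℂ)
      · linear_combination -hμsq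
      · ring
      · intro h
        rcases hμ with hcase | hcase
        · rw [hcase] at h
          have hreal : T/ω + lam = Real.sin (2*ω*T)/(2*ω^2) := by exact_mod_cast h
          linarith
        · rw [hcase] at h
          have hreal : T/ω - lam = Real.sin (2*ω*T)/(2*ω^2) := by
            have h' : ((T/ω + -lam : ℝ):ℂ) = ((Real.sin (2*ω*T)/(2*ω^2) : ℝ):ℂ) := by
              rw [Complex.ofReal_add, Complex.ofReal_neg]; exact h
            have := Complex.ofReal_injective h'
            linarith
          have h2 : (Real.sin (2*ω*T)/(2*ω^2)) * ((T/ω) - Real.sin (2*ω*T)/(2*ω^2)) = 0 := by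
            linear_combination (-(1/2 : ℝ)) * hlam_sq
              - (1/2) * (T/ω + lam - Real.sin (2*ω*T)/(2*ω^2)) * hreal
          rcases mul_eq_zero.mp h2 with hB0 | hAB
          · apply hc
            rw [hcase]
            have h3 : lam = T/ω := by rw [hB0] at hreal; linarith
            rw [h3]
            push_cast
            ring
          · have h3 : lam = 0 := by linarith [hAB]
            exact hl0.ne' h3
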